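/- For a finite directed graph G with source s and parameter f, the following are equivalent: (1) for every feasible f-local fault set F' with s ∉ F', the propagation closure starting from {s} ∪ (N⁺(s) − F') under the rule 'add any node outside F' with at least f+1 in-neighbors already added' eventually covers all of V − F'; (2) for every partition (F, L, R) of V with s ∈ L, R ≠ ∅, and F a feasible f-local fault set, either some node of R has at least f+1 in-neighbors in L, or R contains an out-neighbor of s. -/

import Mathlib

open Finset

variable {α : Type*}

/-- Incoming neighbors of `v` in the directed graph with edge relation `E`. -/
def inN [Fintype α] [DecidableEq α] (E : α → α → Prop) [DecidableRel E] (v : α) : Finset α :=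
  univ.filter (fun u => E u v)

/-- Outgoing neighbors of `v`. -/
def outN [Fintype α] [DecidableEq α] (E : α → α → Prop) [DecidableRel E] (v : α) : Finset α :=
  univ.filter (fun u => E v u)

/-- `F` is a feasible `f`-local fault set: every node outside `F` has at most `f`
incoming neighbors inside `F`. -/
def feasibleLocal [Fintype α] [DecidableEq α] (E : α → α → Prop) [DecidableRel E]
    (f : ℕ) (F : Finset α) : Prop :=
  ∀ v, v ∉ F → (inN E v ∩ F).card ≤ f

/-- The CPA graph condition: for every partition `(F, L, R)` of the vertex set with
`s ∈ L`, `R` nonempty and `F` a feasible `f`-local fault set, either some node of `R`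
has at least `f+1` in-neighbors in `L`, or `R` contains an out-neighbor of `s`. -/
def cpaCond [Fintype α] [DecidableEq α] (E : α → α → Prop) [DecidableRel E]
    (f : ℕ) (s : α) : Prop :=
  ∀ F L R : Finset α, Disjoint F L → Disjoint F R → Disjoint L R →
    F ∪ L ∪ R = univ → s ∈ L → R.Nonempty → feasibleLocal E f F →
    (∃ v ∈ R, f + 1 ≤ (inN E v ∩ L).card) ∨ (outN E s ∩ R).Nonempty

/-- CPA propagation sequence: `L₀ = {s} ∪ (N⁺(s) \ F')`,
`L_{k+1} = L_k ∪ { v ∈ V − F' − L_k : |N⁻(v) ∩ L_k| ≥ f+1 }`. -/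
def cpaSeq [Fintype α] [DecidableEq α] (E : α → α → Prop) [DecidableRel E]
    (f : ℕ) (s : α) (F' : Finset α) : ℕ → Finset α
  | 0 => insert s (outN E s \ F')
  | k + 1 => cpaSeq E f s F' k ∪
      ((univ \ F') \ cpaSeq E f s F' k).filter
        (fun v => f + 1 ≤ (inN E v ∩ cpaSeq E f s F' k).card)

lemma cpaSeq_mono [Fintype α] [DecidableEq α] (E : α → α → Prop) [DecidableRel E]
    (f : ℕ) (s : α) (F' : Finset α) : Monotone (cpaSeq E f s F') :=
  monotone_nat_of_le_succ fun k => by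
    simp [cpaSeq, Finset.subset_union_left]

lemma cpaSeq_disj [Fintype α] [DecidableEq α] (E : α → α → Prop) [DecidableRel E]
    (f : ℕ) (s : α) (F' : Finset α) (hs : s ∉ F') :
    ∀ k, Disjoint (cpaSeq E f s F' k) F' := by
  intro k
  induction k with
  | zero =>
    simp only [cpaSeq, Finset.disjoint_left]
    intro a ha
    rcases Finset.mem_insert.1 ha with rfl | ha
    · exact hs
    · exact (Finset.mem_sdiff.1 ha).2
  | succ k ih =>
    simp only [cpaSeq, Finset.disjoint_left]
    intro a ha
    rcases Finset.mem_union.1 ha with ha | ha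
    · exact Finset.disjoint_left.1 ih ha
    · exact fun haF => ((Finset.mem_sdiff.1 (Finset.mem_sdiff.1 (Finset.mem_filter.1 ha).1).1).2) haF

lemma cpaSeq_fix [Fintype α] [DecidableEq α] (E : α → α → Prop) [DecidableRel E]
    (f : ℕ) (s : α) (F' : Finset α) :
    ∃ K, cpaSeq E f s F' (K + 1) = cpaSeq E f s F' K := by
  by_contra h
  push_neg at h
  have key : ∀ k, k + 1 ≤ (cpaSeq E f s F' k).card := by
    intro k
    induction k with
    | zero =>
      have : s ∈ cpaSeq E f s F' 0 := Finset.mem_insert_self _ _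
      exact Finset.card_pos.2 ⟨s, this⟩
    | succ k ih =>
      have hss : cpaSeq E f s F' k ⊂ cpaSeq E f s F' (k + 1) :=
        (cpaSeq_mono E f s F' (Nat.le_succ k)).lt_of_ne (h k).symm
      have := Finset.card_lt_card hss
      omega
  have := key (Fintype.card α)
  have hle : (cpaSeq E f s F' (Fintype.card α)).card ≤ Fintype.card α :=
    Finset.card_le_univ _
  omega

/-- equivalence of CPA propagation correctness and the
Tseng–Vaidya–Bhandari topological condition. -/
theorem stmt5 [Fintype α] [DecidableEq α] (E : α → α → Prop) [DecidableRel E]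
    (hirr : ∀ v, ¬ E v v) (f : ℕ) (s : α) :
    (∀ F' : Finset α, feasibleLocal E f F' → s ∉ F' →
        ∃ k, cpaSeq E f s F' k = univ \ F') ↔ cpaCond E f s := by
  constructor
  · -- propagation correctness → condition
    intro h F L R hFL hFR hLR hun hsL hR hfe
    by_contra hcon
    push_neg at hcon
    obtain ⟨h1, h2⟩ := hcon
    have hsF : s ∉ F := Finset.disjoint_right.1 hFL hsL
    obtain ⟨k, hk⟩ := h F hfe hsF
    have hsub : ∀ m, cpaSeq E f s F m ⊆ L := by
      intro m
      induction m with
      | zero =>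
        intro x hx
        rcases Finset.mem_insert.1 hx with rfl | hx
        · exact hsL
        · obtain ⟨hxo, hxF⟩ := Finset.mem_sdiff.1 hx
          have hxR : x ∉ R := by
            intro hxR
            have : x ∈ outN E s ∩ R := Finset.mem_inter.2 ⟨hxo, hxR⟩
            simp [h2] at this
          have : x ∈ F ∪ L ∪ R := hun ▸ Finset.mem_univ x
          rcases Finset.mem_union.1 this with hx' | hx'
          · rcases Finset.mem_union.1 hx' with hx'' | hx''
            · exact absurd hx'' hxF
            · exact hx''
          · exact absurd hx' hxR
      | succ m ih =>
        intro x hx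
        rcases Finset.mem_union.1 hx with hx | hx
        · exact ih hx
        · obtain ⟨hx1, hx2⟩ := Finset.mem_filter.1 hx
          have hxF : x ∉ F := (Finset.mem_sdiff.1 (Finset.mem_sdiff.1 hx1).1).2
          have hcard : f + 1 ≤ (inN E x ∩ L).card := by
            refine le_trans hx2 (Finset.card_le_card ?_)
            exact Finset.inter_subset_inter_left ih
          have hxR : x ∉ R := fun hxR => absurd hcard (by
            have := h1 x hxR
            omega)
          have : x ∈ F ∪ L ∪ R := hun ▸ Finset.mem_univ x
          rcases Finset.mem_union.1 this with hx' | hx'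
          · rcases Finset.mem_union.1 hx' with hx'' | hx''
            · exact absurd hx'' hxF
            · exact hx''
          · exact absurd hx' hxR
    obtain ⟨r, hr⟩ := hR
    have hrL : r ∈ L := hsub k (by
      rw [hk]
      exact Finset.mem_sdiff.2 ⟨Finset.mem_univ r, Finset.disjoint_right.1 hFR hr⟩)
    exact absurd hr (Finset.disjoint_left.1 hLR hrL)
  · -- condition → propagation correctness
    intro hc F' hfe hsF'
    obtain ⟨K, hK⟩ := cpaSeq_fix E f s F'
    refine ⟨K, ?_⟩
    set L := cpaSeq E f s F' K with hLdef
    set R := (univ \ F') \ L with hRdef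
    have hLF : Disjoint L F' := cpaSeq_disj E f s F' hsF' K
    have hLsub : L ⊆ univ \ F' := fun x hx =>
      Finset.mem_sdiff.2 ⟨Finset.mem_univ x, Finset.disjoint_left.1 hLF hx⟩
    by_cases hRne : R.Nonempty
    · exfalso
      have hsL : s ∈ L := cpaSeq_mono E f s F' (Nat.zero_le K) (Finset.mem_insert_self _ _)
      have hun : F' ∪ L ∪ R = univ := by
        rw [Finset.union_assoc, hRdef, Finset.union_sdiff_of_subset hLsub,
          Finset.union_sdiff_of_subset (Finset.subset_univ F')]
      have hd1 : Disjoint F' L := hLF.symm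
      have hd2 : Disjoint F' R := by
        rw [hRdef]
        exact Finset.disjoint_left.2 fun x hx hxR =>
          (Finset.mem_sdiff.1 (Finset.mem_sdiff.1 hxR).1).2 hx
      have hd3 : Disjoint L R := by
        rw [hRdef]
        exact Finset.disjoint_left.2 fun x hx hxR => (Finset.mem_sdiff.1 hxR).2 hx
      rcases hc F' L R hd1 hd2 hd3 hun hsL hRne hfe with ⟨v, hvR, hv⟩ | ⟨x, hx⟩
      · have hvnew : v ∈ cpaSeq E f s F' (K + 1) := by
          simp only [cpaSeq]
          refine Finset.mem_union_right _ (Finset.mem_filter.2 ⟨?_, hv⟩)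
          exact Finset.mem_sdiff.2 ⟨(Finset.mem_sdiff.1 hvR).1, (Finset.mem_sdiff.1 hvR).2⟩
        rw [hK] at hvnew
        exact (Finset.mem_sdiff.1 hvR).2 hvnew
      · obtain ⟨hxo, hxR⟩ := Finset.mem_inter.1 hx
        have hxF : x ∉ F' := (Finset.mem_sdiff.1 (Finset.mem_sdiff.1 hxR).1).2
        have hx0 : x ∈ cpaSeq E f s F' 0 :=
          Finset.mem_insert_of_mem (Finset.mem_sdiff.2 ⟨hxo, hxF⟩)
        exact (Finset.mem_sdiff.1 hxR).2 (cpaSeq_mono E f s F' (Nat.zero_le K) hx0)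
    · rw [Finset.not_nonempty_iff_eq_empty, hRdef, Finset.sdiff_eq_empty_iff_subset] at hRne
      exact Finset.Subset.antisymm hLsub hRne
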